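/- Let η₁, η₂ be analytic functions on 𝔻 with ηⱼ(0) = 0, |ηⱼ(z)| ≤ |z|, ηⱼ'(0) ≠ 0, ηⱼ'(0) > 0 real, and suppose η₁ ∘ η₁ = η₂ ∘ η₂ on 𝔻 and η₁'(0) = η₂'(0). Then η₁ = η₂. (Uniqueness of square roots with respect to composition: convolution square roots with equal nonzero first moment coincide.) -/

import Mathlib

open Complex FormalMultilinearSeries

private lemma comp_coeff_formula (q p : FormalMultilinearSeries ℂ ℂ ℂ) (n : ℕ) :
    (q.comp p).coeff n =
      ∑ c : Composition n, (∏ i, p.coeff (c.blocksFun i)) * q.coeff c.length := by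
  show (∑ c : Composition n, q.compAlongComposition p c) (fun _ => 1) = _
  rw [ContinuousMultilinearMap.sum_apply]
  refine Finset.sum_congr rfl fun c _ => ?_
  rw [FormalMultilinearSeries.compAlongComposition_apply]
  have h : p.applyComposition c (fun _ => (1:ℂ)) = fun i => p.coeff (c.blocksFun i) := by
    funext i
    rfl
  rw [h, FormalMultilinearSeries.apply_eq_prod_smul_coeff, smul_eq_mul]

private lemma coeff_unique (p q : FormalMultilinearSeries ℂ ℂ ℂ)
    (h0p : p.coeff 0 = 0) (h0q : q.coeff 0 = 0)
    (h1 : p.coeff 1 = q.coeff 1)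
    (hne : ∀ n : ℕ, 2 ≤ n → p.coeff 1 + (p.coeff 1) ^ n ≠ 0)
    (hcomp : ∀ n, (p.comp p).coeff n = (q.comp q).coeff n) :
    ∀ n, p.coeff n = q.coeff n := by
  intro n
  induction n using Nat.strong_induction_on with
  | _ n IH =>
    match n, IH with
    | 0, _ => exact h0p.trans h0q.symm
    | 1, _ => exact h1
    | (m + 2), IH =>
      set n := m + 2 with hn
      have hn2 : 2 ≤ n := by omega
      have hpos : 0 < n := by omega
      have key := hcomp n
      rw [comp_coeff_formula, comp_coeff_formula] at key
      set lam := p.coeff 1 with hlam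
      -- the two special compositions
      set cs : Composition n := Composition.single n hpos with hcs
      set co : Composition n := Composition.ones n with hco
      classical
      have hcsne : cs ≠ co := by
        intro h
        have h1' : cs.length = 1 := Composition.single_length hpos
        have h2' : co.length = n := Composition.ones_length n
        rw [h] at h1'
        omega
      set s : Finset (Composition n) := {cs, co} with hs
      have hsplit : ∀ (r : FormalMultilinearSeries ℂ ℂ ℂ),
          ∑ c : Composition n, (∏ i, r.coeff (c.blocksFun i)) * r.coeff c.length
          = (lam * r.coeff n + r.coeff n * lam ^ n) +
            ∑ c ∈ Finset.univ \ s,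
              (∏ i, r.coeff (c.blocksFun i)) * r.coeff c.length → True := fun _ _ => trivial
      clear hsplit
      have hsum : ∀ (f : Composition n → ℂ),
          ∑ c : Composition n, f c = (f cs + f co) + ∑ c ∈ Finset.univ \ s, f c := by
        intro f
        rw [← Finset.sum_sdiff (Finset.subset_univ s), Finset.sum_pair hcsne]
        ring
      rw [hsum, hsum] at key
      have hterm : ∀ c ∈ Finset.univ \ s,
          (∏ i, p.coeff (c.blocksFun i)) * p.coeff c.length
          = (∏ i, q.coeff (c.blocksFun i)) * q.coeff c.length := by
        intro c hc
        simp only [Finset.mem_sdiff, Finset.mem_insert, Finset.mem_singleton, hs,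
          not_or] at hc
        obtain ⟨-, hne1, hne2⟩ := hc
        have hlen : c.length < n := lt_of_le_of_ne c.length_le
          (fun h => hne2 (Composition.eq_ones_iff_length.2 h))
        have hblocks : ∀ i, c.blocksFun i < n :=
          (Composition.ne_single_iff hpos).1 (fun h => hne1 h)
        rw [IH c.length hlen]
        congr 1
        exact Finset.prod_congr rfl fun i _ => IH _ (hblocks i)
      rw [Finset.sum_congr rfl hterm] at key
      -- evaluate the special terms
      have hcs_term : ∀ (r : FormalMultilinearSeries ℂ ℂ ℂ),
          (∏ i, r.coeff (cs.blocksFun i)) * r.coeff cs.length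
            = r.coeff n * r.coeff 1 := by
        intro r
        rw [hcs]
        rw [Finset.prod_congr rfl (fun i _ => congrArg r.coeff (Composition.single_blocksFun hpos i))]
        rw [Finset.prod_const, Finset.card_univ, Fintype.card_fin, Composition.single_length, pow_one]
      have hco_term : ∀ (r : FormalMultilinearSeries ℂ ℂ ℂ),
          (∏ i, r.coeff (co.blocksFun i)) * r.coeff co.length
            = (r.coeff 1) ^ n * r.coeff n := by
        intro r
        rw [hco]
        simp [Composition.ones_length, Composition.ones_blocksFun]
      rw [hcs_term p, hcs_term q, hco_term p, hco_term q, ← h1] at key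
      have : (lam + lam ^ n) * p.coeff n = (lam + lam ^ n) * q.coeff n := by
        ring_nf
        ring_nf at key
        linear_combination key
      exact mul_left_cancel₀ (hne n hn2) this

/-- Uniqueness of compositional square roots (Proposition 4.5): two analytic
self-maps of the disk fixing `0`, with `|ηⱼ(z)| ≤ |z|`, equal positive real
derivative at `0`, and equal compositional squares, coincide. -/
theorem stmt16 (η₁ η₂ : ℂ → ℂ)
    (h₁ : AnalyticOnNhd ℂ η₁ (Metric.ball (0 : ℂ) 1))
    (h₂ : AnalyticOnNhd ℂ η₂ (Metric.ball (0 : ℂ) 1))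
    (h₁0 : η₁ 0 = 0) (h₂0 : η₂ 0 = 0)
    (hb₁ : ∀ z ∈ Metric.ball (0 : ℂ) 1, ‖η₁ z‖ ≤ ‖z‖)
    (hb₂ : ∀ z ∈ Metric.ball (0 : ℂ) 1, ‖η₂ z‖ ≤ ‖z‖)
    (hd₁ : 0 < (deriv η₁ 0).re) (hd₁i : (deriv η₁ 0).im = 0)
    (hd : deriv η₁ 0 = deriv η₂ 0)
    (hsq : ∀ z ∈ Metric.ball (0 : ℂ) 1, η₁ (η₁ z) = η₂ (η₂ z)) :
    ∀ z ∈ Metric.ball (0 : ℂ) 1, η₁ z = η₂ z := by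
  have h0mem : (0:ℂ) ∈ Metric.ball (0:ℂ) 1 := by simp
  obtain ⟨p, hp⟩ := h₁ 0 h0mem
  obtain ⟨q, hq⟩ := h₂ 0 h0mem
  have hcomp1 : HasFPowerSeriesAt (η₁ ∘ η₁) (p.comp p) 0 :=
    HasFPowerSeriesAt.comp (by rw [h₁0]; exact hp) hp
  have hcomp2 : HasFPowerSeriesAt (η₂ ∘ η₂) (q.comp q) 0 :=
    HasFPowerSeriesAt.comp (by rw [h₂0]; exact hq) hq
  have hev : (η₁ ∘ η₁) =ᶠ[nhds 0] (η₂ ∘ η₂) := by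
    filter_upwards [Metric.isOpen_ball.mem_nhds h0mem] with z hz
    exact hsq z hz
  have heq : p.comp p = q.comp q :=
    hcomp1.eq_formalMultilinearSeries (hcomp2.congr hev.symm)
  have h0p : p.coeff 0 = 0 := by
    have := hp.coeff_zero (fun _ => (1:ℂ))
    rwa [h₁0] at this
  have h0q : q.coeff 0 = 0 := by
    have := hq.coeff_zero (fun _ => (1:ℂ))
    rwa [h₂0] at this
  have hdp : deriv η₁ 0 = p.coeff 1 := hp.deriv
  have hdq : deriv η₂ 0 = q.coeff 1 := hq.deriv
  have h1 : p.coeff 1 = q.coeff 1 := by rw [← hdp, ← hdq]; exact hd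
  have hlam : p.coeff 1 = ((deriv η₁ 0).re : ℂ) := by
    rw [← hdp]
    exact Complex.ext (by simp) (by simp [hd₁i])
  have hne : ∀ n : ℕ, 2 ≤ n → p.coeff 1 + (p.coeff 1) ^ n ≠ 0 := by
    intro n _
    rw [hlam, ← ofReal_pow, ← ofReal_add]
    simp only [ne_eq, ofReal_eq_zero]
    positivity
  have hcoeff := coeff_unique p q h0p h0q h1 hne (fun n => by rw [heq])
  have hpq : p = q := by
    funext n
    rw [← mkPiRing_coeff_eq p n, ← mkPiRing_coeff_eq q n, hcoeff n]
  have hsub : HasFPowerSeriesAt (η₁ - η₂) (p - q) 0 := hp.sub hq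
  rw [hpq, sub_self] at hsub
  have hfe : η₁ =ᶠ[nhds 0] η₂ :=
    hsub.eventually_eq_zero.mono fun z h => sub_eq_zero.1 h
  exact fun z hz =>
    AnalyticOnNhd.eqOn_of_preconnected_of_eventuallyEq h₁ h₂
      ((convex_ball (0:ℂ) 1).isPreconnected) h0mem hfe hz
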